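/- For every ELIU_⊥ ontology O, the set E_O is an exhaustive ELI_⊥-approximation set for O, where E_O is defined as follows: first rewrite each inclusion C ⊑ D of O into the inclusions {C' ⊑ D : C' ∈ f(C)}, and then E_O consists of all ontologies obtained by choosing, for each resulting inclusion C' ⊑ D, one inclusion C' ⊑ D' with D' ∈ f(D). Here f(C) is the set of disjunction-free (ELI_⊥) disjuncts of C: f(C) = {C} for C atomic, ⊤, or ⊥; f(∃r.D) = {∃r.D' : D' ∈ f(D)}; f(D₁ ⊓ D₂) = {D₁' ⊓ D₂' : Dᵢ' ∈ f(Dᵢ)}; f(D₁ ⊔ D₂) = f(D₁) ∪ f(D₂). -/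

import Mathlib

set_option autoImplicit false

attribute [local instance] Classical.propDecidable

/-! ### Interpretations, databases, homomorphisms -/

structure Interp (C R A : Type) where
  cn : C → A → Prop
  rn : R → A → A → Prop

namespace Interp

variable {C R A : Type}

/-- The active domain of an interpretation/database. -/
def adom (I : Interp C R A) : Set A :=
  {a | (∃ c, I.cn c a) ∨ (∃ r b, I.rn r a b) ∨ (∃ r b, I.rn r b a)}

/-- An interpretation has finitely many facts (this is what makes it a database). -/
def FiniteFacts (I : Interp C R A) : Prop :=
  {p : C × A | I.cn p.1 p.2}.Finite ∧ {t : R × A × A | I.rn t.1 t.2.1 t.2.2}.Finite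

/-- All facts use only symbols from the signature `(SC, SR)`. -/
def InSig (I : Interp C R A) (SC : Set C) (SR : Set R) : Prop :=
  (∀ c a, I.cn c a → c ∈ SC) ∧ (∀ r a b, I.rn r a b → r ∈ SR)

/-- Restriction of an interpretation to a set of elements. -/
def restrict (I : Interp C R A) (s : Set A) : Interp C R A where
  cn c a := a ∈ s ∧ I.cn c a
  rn r a b := a ∈ s ∧ b ∈ s ∧ I.rn r a b

/-- Semantics of (possibly inverse) roles: `Sum.inl r` is `r`, `Sum.inr r` is `r⁻`. -/
def roleE (I : Interp C R A) : R ⊕ R → A → A → Prop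
  | .inl r, a, b => I.rn r a b
  | .inr r, a, b => I.rn r b a

/-- The undirected graph underlying an interpretation. -/
def graphOf (I : Interp C R A) : SimpleGraph A where
  Adj a b := a ≠ b ∧ ∃ r, I.rn r a b ∨ I.rn r b a
  symm := ⟨by rintro a b ⟨hne, r, hr⟩; exact ⟨hne.symm, r, hr.symm⟩⟩
  loopless := ⟨by rintro a ⟨hne, -⟩; exact hne rfl⟩

/-- A database/interpretation is a tree: the underlying graph is acyclic,
there are no self loops and no multi-edges (trees need not be connected). -/
def IsTree (I : Interp C R A) : Prop :=
  I.graphOf.IsAcyclic ∧ (∀ r a, ¬ I.rn r a a) ∧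
    (∀ (ρ₁ ρ₂ : R ⊕ R) (a b : A), ρ₁ ≠ ρ₂ → I.roleE ρ₁ a b → ¬ I.roleE ρ₂ a b)

end Interp

/-- Homomorphisms between interpretations. -/
structure Hom {C R A B : Type} (I : Interp C R A) (J : Interp C R B) where
  toFun : A → B
  map_cn : ∀ c a, I.cn c a → J.cn c (toFun a)
  map_rn : ∀ r a b, I.rn r a b → J.rn r (toFun a) (toFun b)

/-! ### Tree decompositions and treewidth -/

/-- An `(ℓ,k)`-tree decomposition of an interpretation: an undirected tree `(V,G)`
with bags of size at most `k`, pairwise overlaps of size at most `ℓ`, every active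
element appearing in a nonempty connected set of bags, and every role edge
contained in some bag. -/
structure TreeDecomp {C R A : Type} (I : Interp C R A) (ℓ k : ℕ) where
  V : Type
  G : SimpleGraph V
  conn : G.Connected
  acyc : G.IsAcyclic
  bag : V → Set A
  cover : ∀ a ∈ I.adom, (G.induce {v | a ∈ bag v}).Connected
  edges : ∀ r a b, I.rn r a b → ∃ v, a ∈ bag v ∧ b ∈ bag v
  bagFin : ∀ v, (bag v).Finite
  bagCard : ∀ v, (bag v).ncard ≤ k
  overlap : ∀ v w, v ≠ w → (bag v ∩ bag w).ncard ≤ ℓ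

/-- `I` has treewidth `(ℓ,k)`. -/
def HasTW {C R A : Type} (I : Interp C R A) (ℓ k : ℕ) : Prop :=
  Nonempty (TreeDecomp I ℓ k)

/-! ### Conjunctive queries and UCQs -/

/-- A conjunctive query with `m` answer variables (`Fin m`) and quantified
variables `V`. -/
structure CQ (C R : Type) (m : ℕ) where
  V : Type
  cnAtoms : Set (C × (Fin m ⊕ V))
  rnAtoms : Set (R × (Fin m ⊕ V) × (Fin m ⊕ V))

namespace CQ

variable {C R A : Type} {m : ℕ}

/-- `I ⊨ q(atup)`. -/
def Eval (q : CQ C R m) (I : Interp C R A) (atup : Fin m → A) : Prop :=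
  ∃ h : Fin m ⊕ q.V → A, (∀ i, h (.inl i) = atup i) ∧
    (∀ p ∈ q.cnAtoms, I.cn p.1 (h p.2)) ∧
    (∀ t ∈ q.rnAtoms, I.rn t.1 (h t.2.1) (h t.2.2))

/-- The canonical database of a CQ (all variables as constants). -/
def canon (q : CQ C R m) : Interp C R (Fin m ⊕ q.V) where
  cn c x := (c, x) ∈ q.cnAtoms
  rn r x y := (r, x, y) ∈ q.rnAtoms

/-- The treewidth of a CQ: the treewidth of its canonical database restricted to
the quantified variables (answer variables do not contribute). -/
def HasTWq (q : CQ C R m) (ℓ k : ℕ) : Prop :=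
  HasTW (q.canon.restrict (Set.range Sum.inr)) ℓ k

end CQ

/-- A union of conjunctive queries, as an indexed family of CQs of the same arity. -/
structure UCQ (C R : Type) (m : ℕ) where
  ι : Type
  d : ι → CQ C R m

def UCQ.Eval {C R A : Type} {m : ℕ} (q : UCQ C R m) (I : Interp C R A)
    (atup : Fin m → A) : Prop :=
  ∃ i, (q.d i).Eval I atup

/-! ### Certain answers (generic in the ontology semantics) -/

/-- `atup` is a certain answer on `D` for query semantics `Ev`, w.r.t. all
(nonempty) models satisfying `Mod`: under the standard-names-free reading,
models of `D` are interpretations together with a homomorphism from `D`. -/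
def Certain {C R A : Type} {m : ℕ} (Mod : ∀ Δ : Type, Interp C R Δ → Prop)
    (D : Interp C R A) (Ev : ∀ Δ : Type, Interp C R Δ → (Fin m → Δ) → Prop)
    (atup : Fin m → A) : Prop :=
  ∀ (Δ : Type), Nonempty Δ → ∀ I : Interp C R Δ, Mod Δ I →
    ∀ h : Hom D I, Ev Δ I (fun i => h.toFun (atup i))

/-- `D` is satisfiable w.r.t. the class of models described by `Mod`. -/
def Satisfiable {C R A : Type} (Mod : ∀ Δ : Type, Interp C R Δ → Prop)
    (D : Interp C R A) : Prop :=
  ∃ (Δ : Type) (_ : Nonempty Δ) (I : Interp C R Δ), Nonempty (Hom D I) ∧ Mod Δ I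

/-! ### First-order logic (no equality, no constants) -/

inductive FO (C R : Type) : ℕ → Type
  | cn {n : ℕ} (c : C) (i : Fin n) : FO C R n
  | rn {n : ℕ} (r : R) (i j : Fin n) : FO C R n
  | fls {n : ℕ} : FO C R n
  | imp {n : ℕ} (φ ψ : FO C R n) : FO C R n
  | all {n : ℕ} (φ : FO C R (n+1)) : FO C R n

def FO.Eval {C R A : Type} (I : Interp C R A) : {n : ℕ} → FO C R n → (Fin n → A) → Prop
  | _, .cn c i, v => I.cn c (v i)
  | _, .rn r i j, v => I.rn r (v i) (v j)
  | _, .fls, _ => False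
  | _, .imp φ ψ, v => φ.Eval I v → ψ.Eval I v
  | _, .all φ, v => ∀ a, φ.Eval I (Fin.cons a v)

/-- `I` is a model of the FO ontology `O`. -/
def ModelsFO {C R A : Type} (I : Interp C R A) (O : Set (FO C R 0)) : Prop :=
  ∀ φ ∈ O, φ.Eval I (fun i => i.elim0)

/-- `O ⊨ O'` for FO ontologies. -/
def FOEntails {C R : Type} (O O' : Set (FO C R 0)) : Prop :=
  ∀ (Δ : Type), Nonempty Δ → ∀ I : Interp C R Δ, ModelsFO I O → ModelsFO I O'

/-! ### Tuple-generating dependencies -/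

/-- A TGD with `n` frontier variables, whose body and head are CQs with the
frontier variables as answer variables; `head = none` stands for `⊥`. -/
structure TGD (C R : Type) where
  n : ℕ
  body : CQ C R n
  head : Option (CQ C R n)

def TGD.Sat {C R A : Type} (t : TGD C R) (I : Interp C R A) : Prop :=
  ∀ v : Fin t.n → A, t.body.Eval I v →
    match t.head with
    | some ψ => ψ.Eval I v
    | none => False

def ModelsTGDSet {C R A : Type} (I : Interp C R A) (O : Set (TGD C R)) : Prop :=
  ∀ t ∈ O, t.Sat I

/-! ### Description logic concepts -/

/-- `ELIU` concepts with ⊥, possibly disjunction and the universal role. -/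
inductive ELIU (C R : Type) : Type
  | top
  | bot
  | cn (c : C)
  | inter (X Y : ELIU C R)
  | union (X Y : ELIU C R)
  | exR (ρ : R ⊕ R) (X : ELIU C R)
  | exU (X : ELIU C R)

namespace ELIU

variable {C R A : Type}

def sem (I : Interp C R A) : ELIU C R → A → Prop
  | .top, _ => True
  | .bot, _ => False
  | .cn c, a => I.cn c a
  | .inter X Y, a => X.sem I a ∧ Y.sem I a
  | .union X Y, a => X.sem I a ∨ Y.sem I a
  | .exR ρ X, a => ∃ b, I.roleE ρ a b ∧ X.sem I b
  | .exU X, _ => ∃ b, X.sem I b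

def uFree : ELIU C R → Prop
  | .top => True
  | .bot => True
  | .cn _ => True
  | .inter X Y => X.uFree ∧ Y.uFree
  | .union X Y => X.uFree ∧ Y.uFree
  | .exR _ X => X.uFree
  | .exU _ => False

def disjFree : ELIU C R → Prop
  | .top => True
  | .bot => True
  | .cn _ => True
  | .inter X Y => X.disjFree ∧ Y.disjFree
  | .union _ _ => False
  | .exR _ X => X.disjFree
  | .exU X => X.disjFree

def botFree : ELIU C R → Prop
  | .top => True
  | .bot => False
  | .cn _ => True
  | .inter X Y => X.botFree ∧ Y.botFree
  | .union X Y => X.botFree ∧ Y.botFree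
  | .exR _ X => X.botFree
  | .exU X => X.botFree

end ELIU

/-- A concept inclusion is an `ELI_⊥` CI (no disjunction, no universal role). -/
def ELIbotCI {C R : Type} (p : ELIU C R × ELIU C R) : Prop :=
  p.1.disjFree ∧ p.1.uFree ∧ p.2.disjFree ∧ p.2.uFree

/-- A concept inclusion is an `ELI` CI. -/
def ELICI {C R : Type} (p : ELIU C R × ELIU C R) : Prop :=
  ELIbotCI p ∧ p.1.botFree ∧ p.2.botFree

def ModelsELIUOnt {C R A : Type} (I : Interp C R A)
    (T : Set (ELIU C R × ELIU C R)) : Prop :=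
  ∀ p ∈ T, ∀ a, p.1.sem I a → p.2.sem I a

def EntailsELIU {C R : Type} (T T' : Set (ELIU C R × ELIU C R)) : Prop :=
  ∀ (Δ : Type), Nonempty Δ → ∀ I : Interp C R Δ, ModelsELIUOnt I T → ModelsELIUOnt I T'

/-- `ALCI` concepts. -/
inductive ALCI (C R : Type) : Type
  | top
  | cn (c : C)
  | neg (X : ALCI C R)
  | inter (X Y : ALCI C R)
  | exR (ρ : R ⊕ R) (X : ALCI C R)

namespace ALCI

variable {C R A : Type}

def sem (I : Interp C R A) : ALCI C R → A → Prop
  | .top, _ => True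
  | .cn c, a => I.cn c a
  | .neg X, a => ¬ X.sem I a
  | .inter X Y, a => X.sem I a ∧ Y.sem I a
  | .exR ρ X, a => ∃ b, I.roleE ρ a b ∧ X.sem I b

/-- `C ⊔ D` as an abbreviation. -/
def unionA (X Y : ALCI C R) : ALCI C R := .neg (.inter (.neg X) (.neg Y))

/-- `∀r.C` as an abbreviation. -/
def allR (r : R) (X : ALCI C R) : ALCI C R := .neg (.exR (.inl r) (.neg X))

/-- `∃rⁿ.C` (n-fold nesting). -/
def exPow (r : R) : ℕ → ALCI C R → ALCI C R
  | 0, X => X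
  | n+1, X => .exR (.inl r) (exPow r n X)

end ALCI

def ModelsALCIOnt {C R A : Type} (I : Interp C R A)
    (O : Set (ALCI C R × ALCI C R)) : Prop :=
  ∀ p ∈ O, ∀ a, p.1.sem I a → p.2.sem I a

def EntailsALCI {C R : Type} (O O' : Set (ALCI C R × ALCI C R)) : Prop :=
  ∀ (Δ : Type), Nonempty Δ → ∀ I : Interp C R Δ, ModelsALCIOnt I O → ModelsALCIOnt I O'

/-- The set `O≈` of all `ELI^u_⊥` concept inclusions entailed by the ALCI
ontology `O`. -/
def ELIuApprox {C R : Type} (O : Set (ALCI C R × ALCI C R)) :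
    Set (ELIU C R × ELIU C R) :=
  {p | p.1.disjFree ∧ p.2.disjFree ∧
    ∀ (Δ : Type), Nonempty Δ → ∀ I : Interp C R Δ, ModelsALCIOnt I O →
      ∀ a, p.1.sem I a → p.2.sem I a}

/-! ### bELIQs -/

/-- A bELIQ: either an ELIQ `C(x)` (unary) or a Boolean ELIQ `∃u.C`. -/
inductive BELIQ (C R : Type) : Type
  | q1 (X : ELIU C R)
  | q0 (X : ELIU C R)

namespace BELIQ

variable {C R A : Type}

def arity : BELIQ C R → ℕ
  | .q1 _ => 1
  | .q0 _ => 0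

/-- Well-formedness: the underlying concept is an `ELI` concept. -/
def wf : BELIQ C R → Prop
  | .q1 X => X.disjFree ∧ X.uFree ∧ X.botFree
  | .q0 X => X.disjFree ∧ X.uFree ∧ X.botFree

def Eval : (q : BELIQ C R) → Interp C R A → (Fin q.arity → A) → Prop
  | .q1 X, I, v => X.sem I (v ⟨0, Nat.zero_lt_one⟩)
  | .q0 X, I, _ => ∃ a, X.sem I a

end BELIQ

/-! ### Tree unraveling -/

/-- Paths in a database, indexed by their tail. -/
inductive UPath {C R A : Type} (I : Interp C R A) : A → Type
  | nil (a : A) : UPath I a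
  | cons {a : A} (p : UPath I a) (ρ : R ⊕ R) (b : A) (h : I.roleE ρ a b) : UPath I b

/-- The tree unraveling `D≈_S` of `D` at `S`: it contains all facts of `D|_S`,
the facts along paths, and the connecting facts between `S` and paths. -/
def treeUnravel {C R A : Type} (D : Interp C R A) (S : Set A) :
    Interp C R (A ⊕ (Σ a : A, UPath D a)) where
  cn c x :=
    match x with
    | .inl a => a ∈ S ∧ D.cn c a
    | .inr p => D.cn c p.1
  rn r x y :=
    (∃ a b, a ∈ S ∧ b ∈ S ∧ D.rn r a b ∧ x = .inl a ∧ y = .inl b) ∨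
    (∃ (a : A) (p : UPath D a) (b : A) (h : D.roleE (.inl r) a b),
        x = .inr ⟨a, p⟩ ∧ y = .inr ⟨b, p.cons (.inl r) b h⟩) ∨
    (∃ (a : A) (p : UPath D a) (b : A) (h : D.roleE (.inr r) a b),
        y = .inr ⟨a, p⟩ ∧ x = .inr ⟨b, p.cons (.inr r) b h⟩) ∨
    (∃ (a b : A) (p : UPath D b), a ∈ S ∧ D.rn r a b ∧ x = .inl a ∧ y = .inr ⟨b, p⟩) ∨
    (∃ (a b : A) (p : UPath D b), a ∈ S ∧ D.rn r b a ∧ x = .inr ⟨b, p⟩ ∧ y = .inl a)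

/-! ### (ℓ,k)-unraveling -/

/-- Admissibility of a bag `T` in an `(ℓ,k)`-sequence: `S ⊆ T ⊆ adom(D)` and
`|T \ S| ≤ k`. -/
def SeqOk {C R A : Type} (D : Interp C R A) (S : Set A) (k : ℕ) (T : Set A) : Prop :=
  S ⊆ T ∧ T ⊆ D.adom ∧ (T \ S).Finite ∧ (T \ S).ncard ≤ k

/-- `(ℓ,k)`-sequences `S₀,O₀,S₁,…,Sₙ`, indexed by the last bag `Sₙ`. -/
inductive LKSeq {C R A : Type} (D : Interp C R A) (S : Set A) (ℓ k : ℕ) : Set A → Type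
  | first (S₀ : Set A) (h : SeqOk D S k S₀) : LKSeq D S ℓ k S₀
  | step {T : Set A} (v : LKSeq D S ℓ k T) (O T' : Set A)
      (hO : S ⊆ O) (hOT : O ⊆ T ∩ T') (hOf : (O \ S).Finite)
      (hOl : (O \ S).ncard ≤ ℓ) (hT' : SeqOk D S k T') : LKSeq D S ℓ k T'

/-- Elements of the `(ℓ,k)`-unraveling: elements of `S` keep their names
(`Sum.inl`), all other copies are identified by the sequence at which they are
introduced. -/
abbrev LKElem {C R A : Type} (D : Interp C R A) (S : Set A) (ℓ k : ℕ) : Type :=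
  A ⊕ (Σ T : Set A, LKSeq D S ℓ k T × A)

/-- The copy `a_v` of `a` in the bag of the sequence `v`. -/
noncomputable def LKSeq.rep {C R A : Type} {D : Interp C R A} {S : Set A} {ℓ k : ℕ} :
    {T : Set A} → LKSeq D S ℓ k T → A → LKElem D S ℓ k
  | _, .first S₀ h, a =>
      if a ∈ S then Sum.inl a else Sum.inr ⟨S₀, (LKSeq.first S₀ h, a)⟩
  | _, .step v O T' h1 h2 h3 h4 h5, a =>
      if a ∈ S then Sum.inl a
      else if a ∈ O then v.rep a
      else Sum.inr ⟨T', (LKSeq.step v O T' h1 h2 h3 h4 h5, a)⟩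

/-- The `(ℓ,k)`-unraveling `D≈_{S,ℓ,k}` of `D` up to `S`. -/
noncomputable def unravelLK {C R A : Type} (D : Interp C R A) (S : Set A) (ℓ k : ℕ) :
    Interp C R (LKElem D S ℓ k) where
  cn c x := ∃ (T : Set A) (v : LKSeq D S ℓ k T) (a : A),
      a ∈ T ∧ x = v.rep a ∧ D.cn c a
  rn r x y := ∃ (T : Set A) (v : LKSeq D S ℓ k T) (a b : A),
      a ∈ T ∧ b ∈ T ∧ x = v.rep a ∧ y = v.rep b ∧ D.rn r a b

/-- The uncopying map. -/
def uncopyLK {C R A : Type} {D : Interp C R A} {S : Set A} {ℓ k : ℕ} :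
    LKElem D S ℓ k → A
  | .inl a => a
  | .inr x => x.2.2

/-- `x` is a copy of `a` in the `(ℓ,k)`-unraveling. -/
def IsCopyLK {C R A : Type} {D : Interp C R A} {S : Set A} {ℓ k : ℕ}
    (x : LKElem D S ℓ k) (a : A) : Prop :=
  ∃ (T : Set A) (v : LKSeq D S ℓ k T), a ∈ T ∧ x = v.rep a

/-- The frontier-one `ℓ,k,ℓ',k'`-TGDs entailed by the ALCI ontology `O`. -/
def approxTGDs {C R : Type} (O : Set (ALCI C R × ALCI C R)) (ℓ k ℓ' k' : ℕ) :
    Set (TGD C R) :=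
  {t | t.n ≤ 1 ∧ HasTW t.body.canon ℓ k ∧
       (∀ ψ, t.head = some ψ → HasTW ψ.canon ℓ' k') ∧
       ∀ (Δ : Type), Nonempty Δ → ∀ I : Interp C R Δ, ModelsALCIOnt I O → t.Sat I}

/-! ### The disjunct operation f and the approximation set E_O -/

def fDisj {C R : Type} : ELIU C R → Set (ELIU C R)
  | .top => {ELIU.top}
  | .bot => {ELIU.bot}
  | .cn c => {ELIU.cn c}
  | .inter X Y => {Z | ∃ X' ∈ fDisj X, ∃ Y' ∈ fDisj Y, Z = ELIU.inter X' Y'}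
  | .union X Y => fDisj X ∪ fDisj Y
  | .exR ρ X => {Z | ∃ X' ∈ fDisj X, Z = ELIU.exR ρ X'}
  | .exU X => {Z | ∃ X' ∈ fDisj X, Z = ELIU.exU X'}

/-- The rewriting of `O` replacing each `C ⊑ D` by `{C' ⊑ D : C' ∈ f(C)}`. -/
def rewriteO {C R : Type} (O : Set (ELIU C R × ELIU C R)) :
    Set (ELIU C R × ELIU C R) :=
  {p | ∃ q ∈ O, p.2 = q.2 ∧ p.1 ∈ fDisj q.1}

/-- `E_O`: all ontologies obtained by choosing, for each inclusion `C' ⊑ D` of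
the rewriting, one inclusion `C' ⊑ D'` with `D' ∈ f(D)`. -/
def EO {C R : Type} (O : Set (ELIU C R × ELIU C R)) :
    Set (Set (ELIU C R × ELIU C R)) :=
  {Oh | ∃ g : ELIU C R × ELIU C R → ELIU C R,
      (∀ p ∈ rewriteO O, g p ∈ fDisj p.2) ∧
      Oh = {q | ∃ p ∈ rewriteO O, q = (p.1, g p)}}

/-! ### Direct products -/

def prodInterp {C R : Type} {n : ℕ} {A : Fin n → Type}
    (I : ∀ i, Interp C R (A i)) : Interp C R (∀ i, A i) where
  cn c f := ∀ i, (I i).cn c (f i)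
  rn r f g := ∀ i, (I i).rn r (f i) (g i)

/-! ### Concrete databases and queries for specific statements -/

/-- The grid CQ `q_m` of Statement 16, as its canonical database. -/
def gridDB {C R : Type} (m : ℕ) (r : R) (Aname : Fin m × Fin m → C) :
    Interp C R (Fin m × Fin m) where
  cn c p := c = Aname p
  rn ρ p q := ρ = r ∧ Even (p.1.1 + p.2.1) ∧
    ((p.1.1 : ℤ) - (q.1.1 : ℤ)).natAbs + ((p.2.1 : ℤ) - (q.2.1 : ℤ)).natAbs = 1

/-- The 3-cycle database of Statement 19. -/
def cycleDB {C R : Type} (nA : Fin 3 → C) (r : R) : Interp C R (Fin 3) where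
  cn c i := c = nA i
  rn ρ i j := ρ = r ∧ j = i + 1

/-- The ontology `{Aᵢ ⊓ Aⱼ ⊑ B : 1 ≤ i < j ≤ 3}` of Statement 19. -/
def cycleOnt {C R : Type} (nA : Fin 3 → C) (nB : C) : Set (ELIU C R × ELIU C R) :=
  {p | ∃ i j : Fin 3, i < j ∧
    p = (ELIU.inter (ELIU.cn (nA i)) (ELIU.cn (nA j)), ELIU.cn nB)}

/-- The Boolean CQ `∃x B(x)` of Statement 19. -/
def existsB {C R : Type} (nB : C) : CQ C R 0 where
  V := Unit
  cnAtoms := {(nB, Sum.inr ())}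
  rnAtoms := ∅

/-- The ontology `O = {∃r.⊤ ⊓ ∀r.A ⊑ B₁ ⊔ B₂}` of Statement 14. -/
def O14 {C R : Type} (a b1 b2 : C) (r : R) : Set (ALCI C R × ALCI C R) :=
  {(ALCI.inter (ALCI.exR (.inl r) ALCI.top) (ALCI.allR r (ALCI.cn a)),
    ALCI.unionA (ALCI.cn b1) (ALCI.cn b2))}

/-- The ontology `O_n` of Statement 14. -/
def O14n {C R : Type} (a b1 x : C) (r : R) (n : ℕ) : Set (ALCI C R × ALCI C R) :=
  {(ALCI.exR (.inl r) (ALCI.cn a), ALCI.exPow r n (ALCI.cn x)),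
   (ALCI.exR (.inl r) (ALCI.inter (ALCI.cn a) (ALCI.exPow r (n-1) (ALCI.cn x))),
    ALCI.cn b1)}

/-! ### Auxiliary lemmas for Statement 12 -/

section Stmt12Aux
variable {C R : Type}

theorem fDisj_nonempty (X : ELIU C R) : (fDisj X).Nonempty := by
  induction X with
  | top => exact ⟨_, rfl⟩
  | bot => exact ⟨_, rfl⟩
  | cn c => exact ⟨_, rfl⟩
  | inter X Y hX hY =>
      obtain ⟨x, hx⟩ := hX; obtain ⟨y, hy⟩ := hY
      exact ⟨_, ⟨x, hx, y, hy, rfl⟩⟩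
  | union X Y hX hY =>
      obtain ⟨x, hx⟩ := hX; exact ⟨x, Or.inl hx⟩
  | exR ρ X hX => obtain ⟨x, hx⟩ := hX; exact ⟨_, ⟨x, hx, rfl⟩⟩
  | exU X hX => obtain ⟨x, hx⟩ := hX; exact ⟨_, ⟨x, hx, rfl⟩⟩

theorem fDisj_finite (X : ELIU C R) : (fDisj X).Finite := by
  induction X with
  | top => exact Set.finite_singleton _
  | bot => exact Set.finite_singleton _
  | cn c => exact Set.finite_singleton _
  | inter X Y hX hY =>
      have h : fDisj (ELIU.inter X Y) = Set.image2 ELIU.inter (fDisj X) (fDisj Y) := by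
        ext Z; simp only [fDisj, Set.mem_image2, Set.mem_setOf_eq, eq_comm]
      rw [h]; exact hX.image2 _ hY
  | union X Y hX hY => exact hX.union hY
  | exR ρ X hX =>
      have h : fDisj (ELIU.exR ρ X) = (ELIU.exR ρ) '' (fDisj X) := by
        ext Z; simp only [fDisj, Set.mem_image, Set.mem_setOf_eq, eq_comm]
      rw [h]; exact hX.image _
  | exU X hX =>
      have h : fDisj (ELIU.exU X) = ELIU.exU '' (fDisj X) := by
        ext Z; simp only [fDisj, Set.mem_image, Set.mem_setOf_eq, eq_comm]
      rw [h]; exact hX.image _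

theorem fDisj_disjFree {X X' : ELIU C R} (h : X' ∈ fDisj X) : X'.disjFree := by
  induction X generalizing X' with
  | top => simp only [fDisj, Set.mem_singleton_iff] at h; subst h; trivial
  | bot => simp only [fDisj, Set.mem_singleton_iff] at h; subst h; trivial
  | cn c => simp only [fDisj, Set.mem_singleton_iff] at h; subst h; trivial
  | inter X Y hX hY =>
      obtain ⟨X'', h1, Y'', h2, rfl⟩ := h
      exact ⟨hX h1, hY h2⟩
  | union X Y hX hY =>
      rcases h with h | h
      · exact hX h
      · exact hY h
  | exR ρ X hX => obtain ⟨X'', h1, rfl⟩ := h; have := hX h1; exact this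
  | exU X hX => obtain ⟨X'', h1, rfl⟩ := h; have := hX h1; exact this

theorem fDisj_uFree {X X' : ELIU C R} (hu : X.uFree) (h : X' ∈ fDisj X) : X'.uFree := by
  induction X generalizing X' with
  | top => simp only [fDisj, Set.mem_singleton_iff] at h; subst h; trivial
  | bot => simp only [fDisj, Set.mem_singleton_iff] at h; subst h; trivial
  | cn c => simp only [fDisj, Set.mem_singleton_iff] at h; subst h; trivial
  | inter X Y hX hY =>
      obtain ⟨X'', h1, Y'', h2, rfl⟩ := h
      exact ⟨hX hu.1 h1, hY hu.2 h2⟩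
  | union X Y hX hY =>
      rcases h with h | h
      · exact hX hu.1 h
      · exact hY hu.2 h
  | exR ρ X hX => obtain ⟨X'', h1, rfl⟩ := h; have := hX hu h1; exact this
  | exU X hX => exact absurd hu (by simp [ELIU.uFree])

theorem sem_fDisj_iff {A : Type} (I : Interp C R A) (X : ELIU C R) (a : A) :
    X.sem I a ↔ ∃ X' ∈ fDisj X, X'.sem I a := by
  induction X generalizing a with
  | top => simp [fDisj, ELIU.sem]
  | bot => simp [fDisj, ELIU.sem]
  | cn c => simp [fDisj, ELIU.sem]
  | inter X Y hX hY =>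
      constructor
      · rintro ⟨hx, hy⟩
        obtain ⟨X', hX', hsX⟩ := (hX a).1 hx
        obtain ⟨Y', hY', hsY⟩ := (hY a).1 hy
        exact ⟨_, ⟨X', hX', Y', hY', rfl⟩, hsX, hsY⟩
      · rintro ⟨Z, ⟨X', hX', Y', hY', rfl⟩, hsX, hsY⟩
        exact ⟨(hX a).2 ⟨X', hX', hsX⟩, (hY a).2 ⟨Y', hY', hsY⟩⟩
  | union X Y hX hY =>
      constructor
      · rintro (h | h)
        · obtain ⟨X', h1, h2⟩ := (hX a).1 h; exact ⟨X', Or.inl h1, h2⟩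
        · obtain ⟨Y', h1, h2⟩ := (hY a).1 h; exact ⟨Y', Or.inr h1, h2⟩
      · rintro ⟨Z, h | h, hs⟩
        · exact Or.inl ((hX a).2 ⟨Z, h, hs⟩)
        · exact Or.inr ((hY a).2 ⟨Z, h, hs⟩)
  | exR ρ X hX =>
      constructor
      · rintro ⟨b, hr, hs⟩
        obtain ⟨X', h1, h2⟩ := (hX b).1 hs
        exact ⟨_, ⟨X', h1, rfl⟩, b, hr, h2⟩
      · rintro ⟨Z, ⟨X', h1, rfl⟩, b, hr, hs⟩
        exact ⟨b, hr, (hX b).2 ⟨X', h1, hs⟩⟩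
  | exU X hX =>
      constructor
      · rintro ⟨b, hs⟩
        obtain ⟨X', h1, h2⟩ := (hX b).1 hs
        exact ⟨_, ⟨X', h1, rfl⟩, b, h2⟩
      · rintro ⟨Z, ⟨X', h1, rfl⟩, b, hs⟩
        exact ⟨b, (hX b).2 ⟨X', h1, hs⟩⟩

/-- Direct product over an arbitrary index type. -/
def prodI {ι : Type} {A : ι → Type} (I : ∀ i, Interp C R (A i)) : Interp C R (∀ i, A i) where
  cn c f := ∀ i, (I i).cn c (f i)
  rn r f g := ∀ i, (I i).rn r (f i) (g i)

theorem prodI_sem {ι : Type} [Nonempty ι] {A : ι → Type} (I : ∀ i, Interp C R (A i))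
    (X : ELIU C R) (hd : X.disjFree) (hu : X.uFree) (f : ∀ i, A i) :
    X.sem (prodI I) f ↔ ∀ i, X.sem (I i) (f i) := by
  induction X generalizing f with
  | top => simp [ELIU.sem]
  | bot =>
      simp only [ELIU.sem]
      exact ⟨fun h => h.elim, fun h => h (Classical.arbitrary ι)⟩
  | cn c => exact Iff.rfl
  | inter X Y hX hY =>
      obtain ⟨hdX, hdY⟩ := hd; obtain ⟨huX, huY⟩ := hu
      simp only [ELIU.sem, hX hdX huX, hY hdY huY]
      exact ⟨fun h i => ⟨h.1 i, h.2 i⟩, fun h => ⟨fun i => (h i).1, fun i => (h i).2⟩⟩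
  | union X Y hX hY => exact absurd hd (by simp [ELIU.disjFree])
  | exR ρ X hX =>
      constructor
      · rintro ⟨g, hr, hs⟩ i
        refine ⟨g i, ?_, (hX hd hu g).1 hs i⟩
        cases ρ with
        | inl r => exact hr i
        | inr r => exact hr i
      · intro h
        choose g hg1 hg2 using h
        refine ⟨g, ?_, (hX hd hu g).2 hg2⟩
        cases ρ with
        | inl r => exact fun i => hg1 i
        | inr r => exact fun i => hg1 i
  | exU X hX => exact absurd hu (by simp [ELIU.uFree])

end Stmt12Aux

/-- for every `ELIU_⊥` ontology `O`, the set `E_O` is an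
exhaustive `ELI_⊥`-approximation set for `O`: its members are (finite) `ELI_⊥`
ontologies, each member entails `O`, and every `ELI_⊥` ontology entailing `O`
entails some member. -/
theorem stmt12 {C R : Type} (O : Set (ELIU C R × ELIU C R))
    (hO : ∀ p ∈ O, p.1.uFree ∧ p.2.uFree) (hOfin : O.Finite) :
    (∀ Oh ∈ EO O, Oh.Finite ∧ ∀ p ∈ Oh, ELIbotCI p) ∧
    (∀ Oh ∈ EO O, EntailsELIU Oh O) ∧
    (∀ O'' : Set (ELIU C R × ELIU C R), (∀ p ∈ O'', ELIbotCI p) → O''.Finite →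
      EntailsELIU O'' O → ∃ Oh ∈ EO O, EntailsELIU O'' Oh) := by
  have hrfin : (rewriteO O).Finite := by
    have hsub : rewriteO O ⊆ ⋃ q ∈ O, (fun X => (X, q.2)) '' fDisj q.1 := by
      rintro p ⟨q, hq, h2, h1⟩
      exact Set.mem_biUnion hq ⟨p.1, h1, by rw [← h2]⟩
    exact Set.Finite.subset (hOfin.biUnion fun q _ => (fDisj_finite q.1).image _) hsub
  refine ⟨?_, ?_, ?_⟩
  · -- members of E_O are finite ELI_⊥ ontologies
    rintro Oh ⟨g, hg, rfl⟩
    constructor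
    · have h : {q | ∃ p ∈ rewriteO O, q = (p.1, g p)} = (fun p => (p.1, g p)) '' rewriteO O := by
        ext q; simp only [Set.mem_image, Set.mem_setOf_eq, eq_comm]
      rw [h]; exact hrfin.image _
    · rintro p ⟨q, hq, rfl⟩
      obtain ⟨r, hr, h2, h1⟩ := hq
      obtain ⟨hu1, hu2⟩ := hO r hr
      have hq2u : q.2.uFree := by rw [h2]; exact hu2
      exact ⟨fDisj_disjFree h1, fDisj_uFree hu1 h1,
        fDisj_disjFree (hg q ⟨r, hr, h2, h1⟩), fDisj_uFree hq2u (hg q ⟨r, hr, h2, h1⟩)⟩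
  · -- each member entails O
    rintro Oh ⟨g, hg, rfl⟩ Δ hne I hI p hp a hsa
    obtain ⟨X', hX', hsX'⟩ := (sem_fDisj_iff I p.1 a).1 hsa
    have hmem : (X', p.2) ∈ rewriteO O := ⟨p, hp, rfl, hX'⟩
    have hsg := hI _ ⟨(X', p.2), hmem, rfl⟩ a hsX'
    exact (sem_fDisj_iff I p.2 a).2 ⟨_, hg (X', p.2) hmem, hsg⟩
  · -- exhaustiveness
    intro O'' hO'' _ hent
    by_contra hc
    push_neg at hc
    haveI : Inhabited (ELIU C R) := ⟨ELIU.top⟩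
    have key : ∃ p ∈ rewriteO O, ∀ D' ∈ fDisj p.2, ¬ EntailsELIU O'' {(p.1, D')} := by
      by_contra hk
      push_neg at hk
      choose! g hg1 hg2 using hk
      refine hc _ ⟨g, hg1, rfl⟩ ?_
      rintro Δ hne I hI q ⟨p, hp, rfl⟩ a hsa
      exact hg2 p hp Δ hne I hI _ rfl a hsa
    obtain ⟨p, hp, hD⟩ := key
    obtain ⟨r, hr, h2, h1⟩ := hp
    obtain ⟨p1, p2⟩ := p
    have h2' : p2 = r.2 := h2
    subst h2'
    have H : ∀ i : (fDisj r.2 : Set (ELIU C R)), ∃ (Δ : Type) (I : Interp C R Δ) (a : Δ),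
        Nonempty Δ ∧ ModelsELIUOnt I O'' ∧ p1.sem I a ∧ ¬ (i : ELIU C R).sem I a := by
      intro i
      have h := hD i i.2
      unfold EntailsELIU at h
      push_neg at h
      obtain ⟨Δ, hne, I, hI, hnot⟩ := h
      unfold ModelsELIUOnt at hnot
      push_neg at hnot
      obtain ⟨q, hq, a, h1, h2⟩ := hnot
      rw [Set.mem_singleton_iff] at hq
      subst hq
      exact ⟨Δ, I, a, hne, hI, h1, h2⟩
    choose Δ I a hne hmod hsem hnsem using H
    obtain ⟨D0, hD0⟩ := fDisj_nonempty r.2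
    haveI : Nonempty (fDisj r.2 : Set (ELIU C R)) := ⟨⟨D0, hD0⟩⟩
    haveI hJne : Nonempty (∀ i, Δ i) := Classical.nonempty_pi.2 hne
    have hJmod : ModelsELIUOnt (prodI I) O'' := by
      intro q hq f hf
      obtain ⟨hd1, hu1, hd2, hu2⟩ := hO'' q hq
      have h1 := (prodI_sem I q.1 hd1 hu1 f).1 hf
      exact (prodI_sem I q.2 hd2 hu2 f).2 fun i => hmod i q hq (f i) (h1 i)
    have hJO : ModelsELIUOnt (prodI I) O := hent _ hJne (prodI I) hJmod
    obtain ⟨hur1, hur2⟩ := hO r hr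
    have hp1s : p1.sem (prodI I) a :=
      (prodI_sem I p1 (fDisj_disjFree h1) (fDisj_uFree hur1 h1) a).2 hsem
    have hr1s : r.1.sem (prodI I) a := (sem_fDisj_iff (prodI I) r.1 a).2 ⟨p1, h1, hp1s⟩
    have hr2s : r.2.sem (prodI I) a := hJO r hr a hr1s
    obtain ⟨D', hD', hsD'⟩ := (sem_fDisj_iff (prodI I) r.2 a).1 hr2s
    have hall := (prodI_sem I D' (fDisj_disjFree hD') (fDisj_uFree hur2 hD') a).1 hsD'
    exact hnsem ⟨D', hD'⟩ (hall ⟨D', hD'⟩)
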